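/- arXiv:1507.04681 — 3 statements merged into one kernel-verified Lean document; each statement's English description precedes it below -/
import Mathlib

section
/- Let (d_D) be a holomorphically contractible system and let D ⊆ ℂ^m be a bounded domain. Assume there exist sequences (E_n) and (I_n) of domains in ℂ^m such that E_{n+1} ⋐ E_n for all n and ⋂_n E_n = closure(D), and I_n ⋐ I_{n+1} for all n and ⋃_n I_n = D, and such that for every z, w ∈ D one has lim_{n→∞} d_{E_n}(z,w) = lim_{n→∞} d_{I_n}(z,w) = d_D(z,w). Let (D_n) be a sequence of bounded domains in ℂ^m such that the Hausdorff distance 𝔥(closure(D_n), closure(D)) tends to 0 as n → ∞, and such that for each compact set K ⊆ D there exists n₀ with K ⊆ D_n for all n ≥ n₀. Then for every z, w ∈ D, lim_{n→∞} d_{D_n}(z,w) = d_D(z,w) (the values d_{D_n}(z,w) being defined for all sufficiently large n). -/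
open Complex Metric Filter Bornology

noncomputable section

/-- `ℂⁿ` with the Euclidean norm. -/
abbrev Cn (n : ℕ) := EuclideanSpace ℂ (Fin n)

/-- A domain: a nonempty connected open set. -/
def IsCDomain {n : ℕ} (D : Set (Cn n)) : Prop := IsOpen D ∧ IsConnected D

/-- `A ⋐ B`: the closure of `A` is compact and contained in `B`. -/
def CpSub {n : ℕ} (A B : Set (Cn n)) : Prop := IsCompact (closure A) ∧ closure A ⊆ B

/-- The inverse hyperbolic tangent. -/
def arctanh (t : ℝ) : ℝ := (1 / 2) * Real.log ((1 + t) / (1 - t))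

/-- The Poincaré (hyperbolic) distance on the unit disc:
`p(z,w) = arctanh (|z - w| / |1 - conj z * w|)`. -/
def poincare (z w : ℂ) : ℝ :=
  arctanh (‖z - w‖ / ‖1 - (starRingEnd ℂ) z * w‖)

/-- The unit disc, regarded as a domain in `ℂ¹`. -/
def unitDisc1 : Set (Cn 1) := {z | ‖z‖ < 1}

/-- A holomorphically contractible system: a family of nonnegative functions `d n D`,
`D` running over all domains in `ℂⁿ` for all `n`, normalized by the Poincaré distance
on the unit disc, such that all holomorphic maps between domains are contractions. -/
structure HolContractibleSystem where
  d : ∀ n : ℕ, Set (Cn n) → Cn n → Cn n → ℝ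
  nonneg : ∀ (n : ℕ) (D : Set (Cn n)), IsCDomain D → ∀ z ∈ D, ∀ w ∈ D, 0 ≤ d n D z w
  normDisc : ∀ z ∈ unitDisc1, ∀ w ∈ unitDisc1, d 1 unitDisc1 z w = poincare (z 0) (w 0)
  contract : ∀ (n m : ℕ) (D : Set (Cn n)) (G : Set (Cn m)), IsCDomain D → IsCDomain G →
    ∀ f : Cn n → Cn m, DifferentiableOn ℂ f D → Set.MapsTo f D G →
    ∀ z ∈ D, ∀ w ∈ D, d m G (f z) (f w) ≤ d n D z w

/-- **Theorem 1.1.** Let `(d_D)` be a holomorphically contractible system and `D ⊆ ℂ^m` a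
bounded domain. Suppose `(E n)` is a sequence of domains with `E (n+1) ⋐ E n` and
`⋂ n, E n = closure D`, and `(I n)` is a sequence of domains with `I n ⋐ I (n+1)` and
`⋃ n, I n = D`, along which `d` converges to `d_D` pointwise on `D × D`. If `(Dn n)` is a
sequence of bounded domains with `𝔥(closure (Dn n), closure D) → 0` and eventually containing
every compact subset of `D`, then `d_{Dn n}(z,w) → d_D(z,w)` for all `z, w ∈ D`. -/
theorem behaviour_under_hausdorff_convergence
    {m : ℕ} (S : HolContractibleSystem) (D : Set (Cn m))
    (hD : IsCDomain D) (hDb : IsBounded D)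
    (E I : ℕ → Set (Cn m))
    (hEdom : ∀ n, IsCDomain (E n)) (hEsub : ∀ n, CpSub (E (n + 1)) (E n))
    (hEint : ⋂ n, E n = closure D)
    (hIdom : ∀ n, IsCDomain (I n)) (hIsub : ∀ n, CpSub (I n) (I (n + 1)))
    (hIun : ⋃ n, I n = D)
    (hEconv : ∀ z ∈ D, ∀ w ∈ D,
      Tendsto (fun n => S.d m (E n) z w) atTop (nhds (S.d m D z w)))
    (hIconv : ∀ z ∈ D, ∀ w ∈ D,
      Tendsto (fun n => S.d m (I n) z w) atTop (nhds (S.d m D z w)))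
    (Dn : ℕ → Set (Cn m))
    (hDn : ∀ n, IsCDomain (Dn n)) (hDnb : ∀ n, IsBounded (Dn n))
    (hH : Tendsto (fun n => hausdorffDist (closure (Dn n)) (closure D)) atTop (nhds 0))
    (hK : ∀ K : Set (Cn m), K ⊆ D → IsCompact K → ∃ n₀ : ℕ, ∀ n ≥ n₀, K ⊆ Dn n) :
    ∀ z ∈ D, ∀ w ∈ D,
      Tendsto (fun n => S.d m (Dn n) z w) atTop (nhds (S.d m D z w)) := by
  -- auxiliary: monotonicity of the system under inclusion
  have mono : ∀ (A B : Set (Cn m)), IsCDomain A → IsCDomain B → A ⊆ B →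
      ∀ z ∈ A, ∀ w ∈ A, S.d m B z w ≤ S.d m A z w := by
    intro A B hA hB hAB z hz w hw
    exact S.contract m m A B hA hB (fun x => x) differentiableOn_id
      (fun x hx => hAB hx) z hz w hw
  have hImono : Monotone I := monotone_nat_of_le_succ
    (fun n => subset_closure.trans (hIsub n).2)
  intro z hz w hw
  rw [Metric.tendsto_atTop]
  intro ε hε
  -- pick j with d_{E j} z w > d_D z w - ε  (z, w ∈ E j automatically)
  obtain ⟨j, hj⟩ := ((hEconv z hz w hw).eventually
    (eventually_gt_nhds (by linarith : S.d m D z w - ε < S.d m D z w))).exists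
  have hzE : ∀ n, z ∈ E n := fun n => by
    have : z ∈ ⋂ n, E n := hEint ▸ subset_closure hz
    exact Set.mem_iInter.mp this n
  have hwE : ∀ n, w ∈ E n := fun n => by
    have : w ∈ ⋂ n, E n := hEint ▸ subset_closure hw
    exact Set.mem_iInter.mp this n
  -- pick k with z, w ∈ I k and d_{I k} z w < d_D z w + ε
  obtain ⟨kz, hkz⟩ : ∃ k, z ∈ I k := Set.mem_iUnion.mp (hIun ▸ hz)
  obtain ⟨kw, hkw⟩ : ∃ k, w ∈ I k := Set.mem_iUnion.mp (hIun ▸ hw)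
  have hzwI : ∀ᶠ n in atTop, z ∈ I n ∧ w ∈ I n :=
    eventually_atTop.mpr ⟨max kz kw, fun n hn =>
      ⟨hImono (le_trans (le_max_left _ _) hn) hkz,
       hImono (le_trans (le_max_right _ _) hn) hkw⟩⟩
  obtain ⟨k, hk1, hk2⟩ := (((hIconv z hz w hw).eventually
      (eventually_lt_nhds (by linarith : S.d m D z w < S.d m D z w + ε))).and
      hzwI).exists
  -- thickening of closure D inside E j
  have hDc : IsCompact (closure D) := hDb.isCompact_closure
  obtain ⟨δ, hδ, hthick⟩ := hDc.exists_thickening_subset_open (hEdom j).1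
    (by rw [← hEint]; exact Set.iInter_subset _ j)
  -- eventually Dn n ⊆ E j
  have hDnE : ∀ᶠ n in atTop, Dn n ⊆ E j := by
    filter_upwards [(tendsto_order.mp hH).2 δ hδ] with n hn
    intro x hx
    apply hthick
    rw [Metric.mem_thickening_iff_infDist_lt (hD.2.1.closure)]
    calc Metric.infDist x (closure D)
        ≤ hausdorffDist (closure (Dn n)) (closure D) :=
          Metric.infDist_le_hausdorffDist_of_mem (subset_closure hx)
            (Metric.hausdorffEdist_ne_top_of_nonempty_of_bounded
              ((hDn n).2.1.closure) (hD.2.1.closure) (hDnb n).closure hDb.closure)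
      _ < δ := hn
  -- eventually closure (I k) ⊆ Dn n
  obtain ⟨n₀, hn₀⟩ := hK (closure (I k)) ((hIsub k).2.trans
      (by rw [← hIun]; exact Set.subset_iUnion I (k+1))) (hIsub k).1
  obtain ⟨N, hN⟩ := eventually_atTop.mp
    (hDnE.and (eventually_atTop.mpr ⟨n₀, hn₀⟩))
  refine ⟨N, fun n hn => ?_⟩
  obtain ⟨hsubE, hsubI⟩ := hN n hn
  have hzD : z ∈ Dn n := (subset_closure.trans hsubI) hk2.1
  have hwD : w ∈ Dn n := (subset_closure.trans hsubI) hk2.2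
  have h1 : S.d m (E j) z w ≤ S.d m (Dn n) z w :=
    mono (Dn n) (E j) (hDn n) (hEdom j) hsubE z hzD w hwD
  have h2 : S.d m (Dn n) z w ≤ S.d m (I k) z w :=
    mono (I k) (Dn n) (hIdom k) (hDn n) (subset_closure.trans hsubI) z hk2.1 w hk2.2
  rw [Real.dist_eq, abs_sub_lt_iff]
  constructor <;> linarith
end
end

section
/- Let D ⊆ ℂ^m be a bounded domain. Assume there exist sequences (E_n) and (I_n) of domains in ℂ^m such that E_{n+1} ⋐ E_n for all n and ⋂_n E_n = closure(D), and I_n ⋐ I_{n+1} for all n and ⋃_n I_n = D. Let (D_n) be a sequence of bounded domains in ℂ^m such that the Hausdorff distance 𝔥(closure(D_n), closure(D)) tends to 0 as n → ∞, and such that for each compact set K ⊆ D there exists n₀ with K ⊆ D_n for all n ≥ n₀. Then there exist m₁ ∈ ℕ and two sequences (L_n), (U_n) of domains in ℂ^m such that: L_n ⊆ L_{n+1} for all n, ⋃_n L_n = D, U_{n+1} ⋐ U_n for all n, ⋂_n U_n = closure(D), and L_n ⊆ D_{m₁+n−1} ⊆ U_n for every n ∈ ℕ. -/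
open Complex Metric Filter Bornology

noncomputable section

/-- A thickening of the closure of a bounded domain is a bounded domain. -/
lemma isCDomain_thickening {m : ℕ} (D : Set (Cn m)) (hD : IsCDomain D)
    (r : ℝ) (hr : 0 < r) : IsCDomain (thickening r (closure D)) := by
  obtain ⟨x0, hx0⟩ : (closure D).Nonempty := hD.2.nonempty.closure
  refine ⟨isOpen_thickening, ⟨⟨x0, self_subset_thickening hr _ hx0⟩, ?_⟩⟩
  have heq : thickening r (closure D)
      = ⋃₀ ((fun x => closure D ∪ ball x r) '' (closure D)) := by
    ext y
    simp only [thickening_eq_biUnion_ball, Set.mem_iUnion, Set.sUnion_image, Set.mem_union,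
      Set.mem_iUnion, exists_prop]
    constructor
    · rintro ⟨x, hx, hy⟩; exact ⟨x, hx, Or.inr hy⟩
    · rintro ⟨x, hx, (hy | hy)⟩
      · exact ⟨y, hy, mem_ball_self hr⟩
      · exact ⟨x, hx, hy⟩
  rw [heq]
  refine isPreconnected_sUnion x0 _ ?_ ?_
  · rintro s ⟨x, hx, rfl⟩; exact Or.inl hx0
  · rintro s ⟨x, hx, rfl⟩
    exact IsPreconnected.union x hx (mem_ball_self hr)
      (hD.2.isPreconnected.closure) (convex_ball x r).isPreconnected

/-- Under the same assumptions as in the squeezing lemma, there exist `m₁` and sequences of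
domains `(L n)` increasing to `D` and `(U n)` with `U (n+1) ⋐ U n` and `⋂ n, U n = closure D`
such that `L n ⊆ Dn (m₁ + n) ⊆ U n` for all `n` (with `0`-based indexing of the sequences,
corresponding to `L_n ⊆ D_{m₁+n-1} ⊆ U_n` for `1`-based indexing in the paper). -/
theorem exists_squeezing_sequences
    {m : ℕ} (D : Set (Cn m)) (hD : IsCDomain D) (hDb : IsBounded D)
    (E I : ℕ → Set (Cn m))
    (hEdom : ∀ n, IsCDomain (E n)) (hEsub : ∀ n, CpSub (E (n + 1)) (E n))
    (hEint : ⋂ n, E n = closure D)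
    (hIdom : ∀ n, IsCDomain (I n)) (hIsub : ∀ n, CpSub (I n) (I (n + 1)))
    (hIun : ⋃ n, I n = D)
    (Dn : ℕ → Set (Cn m))
    (hDn : ∀ n, IsCDomain (Dn n)) (hDnb : ∀ n, IsBounded (Dn n))
    (hH : Tendsto (fun n => hausdorffDist (closure (Dn n)) (closure D)) atTop (nhds 0))
    (hK : ∀ K : Set (Cn m), K ⊆ D → IsCompact K → ∃ n₀ : ℕ, ∀ n ≥ n₀, K ⊆ Dn n) :
    ∃ (m₁ : ℕ) (L U : ℕ → Set (Cn m)),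
      (∀ n, IsCDomain (L n)) ∧ (∀ n, IsCDomain (U n)) ∧
      (∀ n, L n ⊆ L (n + 1)) ∧ (⋃ n, L n) = D ∧
      (∀ n, CpSub (U (n + 1)) (U n)) ∧ (⋂ n, U n) = closure D ∧
      (∀ n, L n ⊆ Dn (m₁ + n) ∧ Dn (m₁ + n) ⊆ U n) := by
  have hDne : D.Nonempty := hD.2.nonempty
  have hcDne : (closure D).Nonempty := hDne.closure
  have hcDb : IsBounded (closure D) := hDb.closure
  -- monotonicity of `I`
  have hImono : ∀ j k, j ≤ k → I j ⊆ I k := by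
    intro j k hjk
    induction k, hjk using Nat.le_induction with
    | base => exact subset_rfl
    | succ k hk ih => exact ih.trans (subset_closure.trans (hIsub k).2)
  have hIsubD : ∀ j, closure (I j) ⊆ D := by
    intro j
    refine (hIsub j).2.trans ?_
    rw [← hIun]; exact Set.subset_iUnion I (j + 1)
  -- thresholds for the lower sequence
  have hg : ∀ j, ∃ n₀, ∀ k ≥ n₀, closure (I j) ⊆ Dn k :=
    fun j => hK _ (hIsubD j) (hIsub j).1
  choose g hgs using hg
  set m₁ := g 0 with hm₁
  set a : ℕ → ℕ := fun n => Nat.findGreatest (fun j => g j ≤ m₁ + n) n with ha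
  have hP0 : ∀ n, g 0 ≤ m₁ + n := fun n => Nat.le_add_right _ _
  have ha_spec : ∀ n, g (a n) ≤ m₁ + n := fun n =>
    Nat.findGreatest_spec (P := fun j => g j ≤ m₁ + n) (Nat.zero_le n) (hP0 n)
  have ha_mono : ∀ n k, n ≤ k → a n ≤ a k := by
    have step : ∀ n, a n ≤ a (n + 1) := by
      intro n
      exact Nat.le_findGreatest ((Nat.findGreatest_le n).trans (Nat.le_succ n))
        ((ha_spec n).trans (by omega))
    intro n k hnk
    induction k, hnk using Nat.le_induction with
    | base => exact le_rfl
    | succ k hk ih => exact ih.trans (step k)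
  have ha_unbdd : ∀ v, ∃ n, v ≤ a n := by
    intro v
    refine ⟨max v (g v), Nat.le_findGreatest (le_max_left _ _) ?_⟩
    exact (le_max_right v (g v)).trans (Nat.le_add_left _ _)
  -- the Hausdorff distances
  set δ : ℕ → ℝ := fun k => hausdorffDist (closure (Dn k)) (closure D) with hδ
  have hδ0 : ∀ k, 0 ≤ δ k := fun k => hausdorffDist_nonneg
  obtain ⟨C, hC⟩ : BddAbove (Set.range δ) := hH.bddAbove_range
  have hCb : ∀ k, δ k ≤ C := fun k => hC ⟨k, rfl⟩
  set s : ℕ → ℝ := fun n => ⨆ k, δ (m₁ + n + k) with hs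
  have hsbdd : ∀ n, BddAbove (Set.range fun k => δ (m₁ + n + k)) := by
    intro n; exact ⟨C, by rintro y ⟨k, rfl⟩; exact hCb _⟩
  have hδles : ∀ n, δ (m₁ + n) ≤ s n := by
    intro n
    simpa using le_ciSup (hsbdd n) 0
  have hs0 : ∀ n, 0 ≤ s n := fun n => (hδ0 _).trans (hδles n)
  have hsanti : ∀ n, s (n + 1) ≤ s n := by
    intro n
    refine ciSup_le fun k => ?_
    have h1 : m₁ + (n + 1) + k = m₁ + n + (k + 1) := by omega
    calc δ (m₁ + (n + 1) + k) = δ (m₁ + n + (k + 1)) := by rw [h1]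
      _ ≤ s n := le_ciSup (hsbdd n) (k + 1)
  have hstend : Tendsto s atTop (nhds 0) := by
    rw [Metric.tendsto_atTop]
    intro ε hε
    rw [Metric.tendsto_atTop] at hH
    obtain ⟨N, hN⟩ := hH (ε / 2) (by positivity)
    refine ⟨N, fun n hn => ?_⟩
    have hsn : s n ≤ ε / 2 := by
      refine ciSup_le fun k => ?_
      have := hN (m₁ + n + k) (by omega)
      rw [Real.dist_eq, sub_zero, _root_.abs_of_nonneg (hδ0 _)] at this
      exact this.le
    rw [Real.dist_eq, sub_zero, _root_.abs_of_nonneg (hs0 n)]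
    linarith
  -- the radii
  set e : ℕ → ℝ := fun n => s n + (1 / 2 : ℝ) ^ n with he
  have he_pos : ∀ n, 0 < e n := fun n => by
    have := hs0 n
    have : (0:ℝ) < (1 / 2 : ℝ) ^ n := by positivity
    simp only [he]
    linarith [hs0 n]
  have he_lt : ∀ n, e (n + 1) < e n := by
    intro n
    simp only [he]
    have h1 : ((1:ℝ) / 2) ^ (n + 1) < (1 / 2) ^ n := by
      apply pow_lt_pow_right_of_lt_one₀ <;> norm_num
    linarith [hsanti n]
  have he_tend : Tendsto e atTop (nhds 0) := by
    have h2 : Tendsto (fun n : ℕ => ((1:ℝ) / 2) ^ n) atTop (nhds 0) :=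
      tendsto_pow_atTop_nhds_zero_of_lt_one (by norm_num) (by norm_num)
    simpa only [add_zero] using hstend.add h2
  have hδlte : ∀ n, δ (m₁ + n) < e n := by
    intro n
    have : (0:ℝ) < (1 / 2 : ℝ) ^ n := by positivity
    have := hδles n
    simp only [he]
    linarith
  -- the sequences
  refine ⟨m₁, fun n => I (a n), fun n => thickening (e n) (closure D),
    fun n => hIdom (a n), fun n => isCDomain_thickening D hD _ (he_pos n), ?_, ?_, ?_, ?_, ?_⟩
  · exact fun n => hImono _ _ (ha_mono n (n + 1) (Nat.le_succ n))
  · apply Set.Subset.antisymm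
    · refine Set.iUnion_subset fun n => ?_
      rw [← hIun]; exact Set.subset_iUnion I (a n)
    · intro x hx
      rw [← hIun] at hx
      obtain ⟨j, hj⟩ := Set.mem_iUnion.1 hx
      obtain ⟨n, hn⟩ := ha_unbdd j
      exact Set.mem_iUnion.2 ⟨n, hImono j (a n) hn hj⟩
  · intro n
    constructor
    · exact (hcDb.thickening).isCompact_closure
    · refine (closure_thickening_subset_cthickening _ _).trans ?_
      exact cthickening_subset_thickening' (he_pos n) (he_lt n) _
  · apply Set.Subset.antisymm
    · intro x hx
      have hd : ∀ n, infDist x (closure D) ≤ e n := by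
        intro n
        have := Set.mem_iInter.1 hx n
        exact ((mem_thickening_iff_infDist_lt hcDne).1 this).le
      have h0 : infDist x (closure D) ≤ 0 :=
        ge_of_tendsto he_tend (Eventually.of_forall hd)
      have h0' : infDist x (closure D) = 0 := le_antisymm h0 infDist_nonneg
      have : x ∈ closure (closure D) := (mem_closure_iff_infDist_zero hcDne).2 h0'
      rwa [closure_closure] at this
    · exact Set.subset_iInter fun n => self_subset_thickening (he_pos n) _
  · intro n
    constructor
    · exact subset_closure.trans (hgs (a n) (m₁ + n) (ha_spec n))
    · intro x hx
      have hne : (closure (Dn (m₁ + n))).Nonempty := (hDn _).2.nonempty.closure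
      have hfin : EMetric.hausdorffEdist (closure (Dn (m₁ + n))) (closure D) ≠ ⊤ :=
        hausdorffEdist_ne_top_of_nonempty_of_bounded hne hcDne ((hDnb _).closure) hcDb
      have h1 : infDist x (closure D) ≤ δ (m₁ + n) :=
        infDist_le_hausdorffDist_of_mem (subset_closure hx) hfin
      exact (mem_thickening_iff_infDist_lt hcDne).2 (h1.trans_lt (hδlte n))
end
end

section
/- Let D ⊆ ℂ^m be a bounded domain and let (d_G)_G be a family of functions d_G : G×G → [0,∞), indexed by domains G ⊆ ℂ^m, which is antitone with respect to inclusion, i.e. whenever G ⊆ G' are domains in ℂ^m, then d_{G'}(z,w) ≤ d_G(z,w) for all z, w ∈ G. Assume there exist sequences (E_n) and (I_n) of domains in ℂ^m such that E_{n+1} ⋐ E_n for all n and ⋂_n E_n = closure(D), and I_n ⋐ I_{n+1} for all n and ⋃_n I_n = D, and such that for every z, w ∈ D one has lim_{n→∞} d_{E_n}(z,w) = lim_{n→∞} d_{I_n}(z,w) = d_D(z,w). Let (D_n) be a sequence of bounded domains in ℂ^m such that the Hausdorff distance 𝔥(closure(D_n), closure(D)) tends to 0 as n → ∞, and such that for each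 compact set K ⊆ D there exists n₀ with K ⊆ D_n for all n ≥ n₀. Then for every z, w ∈ D, lim_{n→∞} d_{D_n}(z,w) = d_D(z,w). -/
open Complex Metric Filter Bornology

noncomputable section

/-- Abstract core of the main theorem: let `d` be a family of nonnegative functions indexed
by domains in `ℂ^m` which is antitone with respect to inclusion of domains. If `d` converges
to `d_D` along a decreasing sequence `(E n)` of domains with `E (n+1) ⋐ E n`,
`⋂ n, E n = closure D`, and along an increasing sequence `(I n)` of domains with
`I n ⋐ I (n+1)`, `⋃ n, I n = D`, then `d` converges to `d_D` along any sequence of bounded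
domains `(Dn n)` with `𝔥(closure (Dn n), closure D) → 0` eventually containing each compact
subset of `D`. -/
theorem antitone_family_hausdorff_convergence
    {m : ℕ} (d : Set (Cn m) → Cn m → Cn m → ℝ)
    (hnonneg : ∀ G : Set (Cn m), IsCDomain G → ∀ z ∈ G, ∀ w ∈ G, 0 ≤ d G z w)
    (hanti : ∀ G G' : Set (Cn m), IsCDomain G → IsCDomain G' → G ⊆ G' →
      ∀ z ∈ G, ∀ w ∈ G, d G' z w ≤ d G z w)
    (D : Set (Cn m)) (hD : IsCDomain D) (hDb : IsBounded D)
    (E I : ℕ → Set (Cn m))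
    (hEdom : ∀ n, IsCDomain (E n)) (hEsub : ∀ n, CpSub (E (n + 1)) (E n))
    (hEint : ⋂ n, E n = closure D)
    (hIdom : ∀ n, IsCDomain (I n)) (hIsub : ∀ n, CpSub (I n) (I (n + 1)))
    (hIun : ⋃ n, I n = D)
    (hEconv : ∀ z ∈ D, ∀ w ∈ D, Tendsto (fun n => d (E n) z w) atTop (nhds (d D z w)))
    (hIconv : ∀ z ∈ D, ∀ w ∈ D, Tendsto (fun n => d (I n) z w) atTop (nhds (d D z w)))
    (Dn : ℕ → Set (Cn m))
    (hDn : ∀ n, IsCDomain (Dn n)) (hDnb : ∀ n, IsBounded (Dn n))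
    (hH : Tendsto (fun n => hausdorffDist (closure (Dn n)) (closure D)) atTop (nhds 0))
    (hK : ∀ K : Set (Cn m), K ⊆ D → IsCompact K → ∃ n₀ : ℕ, ∀ n ≥ n₀, K ⊆ Dn n) :
    ∀ z ∈ D, ∀ w ∈ D, Tendsto (fun n => d (Dn n) z w) atTop (nhds (d D z w)) := by
  intro z hz w hw
  have hDc : IsCompact (closure D) := hDb.isCompact_closure
  have hImono : ∀ a b : ℕ, a ≤ b → I a ⊆ I b := by
    intro a b hab
    induction b, hab using Nat.le_induction with
    | base => exact subset_rfl
    | succ n hn ih => exact ih.trans (subset_closure.trans (hIsub n).2)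
  have hIsubD : ∀ k, closure (I k) ⊆ D := by
    intro k
    refine (hIsub k).2.trans ?_
    rw [← hIun]
    exact Set.subset_iUnion I (k + 1)
  rw [Metric.tendsto_atTop]
  intro ε hε
  set L := d D z w with hL
  -- pick k₁ for the outer approximation
  obtain ⟨k₁, hk₁⟩ := Metric.tendsto_atTop.1 (hEconv z hz w hw) ε hε
  have hEk₁ : dist (d (E k₁) z w) L < ε := hk₁ k₁ le_rfl
  -- pick k₂ for the inner approximation, large enough that z, w ∈ I k₂
  obtain ⟨kz, hkz⟩ : ∃ k, z ∈ I k := Set.mem_iUnion.1 (hIun ▸ hz)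
  obtain ⟨kw, hkw⟩ : ∃ k, w ∈ I k := Set.mem_iUnion.1 (hIun ▸ hw)
  obtain ⟨N₂, hN₂⟩ := Metric.tendsto_atTop.1 (hIconv z hz w hw) ε hε
  set k₂ := max N₂ (max kz kw) with hk₂def
  have hzI : z ∈ I k₂ := hImono kz k₂ ((le_max_left _ _).trans (le_max_right _ _)) hkz
  have hwI : w ∈ I k₂ := hImono kw k₂ ((le_max_right _ _).trans (le_max_right _ _)) hkw
  have hIk₂ : dist (d (I k₂) z w) L < ε := hN₂ k₂ (le_max_left _ _)
  -- thickening of closure D inside E k₁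
  have hclD_sub : closure D ⊆ E k₁ := by
    rw [← hEint]; exact Set.iInter_subset E k₁
  obtain ⟨δ, hδ, hthick⟩ := hDc.exists_thickening_subset_open (hEdom k₁).1 hclD_sub
  -- eventual properties in n
  obtain ⟨N₃, hN₃⟩ := hK {z, w} (by simp [Set.insert_subset_iff, hz, hw])
    ((Set.finite_singleton w).insert z).isCompact
  obtain ⟨N₄, hN₄⟩ := hK (closure (I k₂)) (hIsubD k₂) (hIsub k₂).1
  obtain ⟨N₅, hN₅⟩ := Metric.tendsto_atTop.1 hH δ hδ
  refine ⟨max N₃ (max N₄ N₅), fun n hn => ?_⟩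
  have hn₃ : N₃ ≤ n := le_trans (le_max_left _ _) hn
  have hn₄ : N₄ ≤ n := le_trans ((le_max_left _ _).trans (le_max_right _ _)) hn
  have hn₅ : N₅ ≤ n := le_trans ((le_max_right _ _).trans (le_max_right _ _)) hn
  have hzDn : z ∈ Dn n := hN₃ n hn₃ (by simp)
  have hwDn : w ∈ Dn n := hN₃ n hn₃ (by simp)
  have hIDn : I k₂ ⊆ Dn n := subset_closure.trans (hN₄ n hn₄)
  -- Dn n ⊆ E k₁
  have hHd : hausdorffDist (closure (Dn n)) (closure D) < δ := by
    have := hN₅ n hn₅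
    rw [Real.dist_eq, abs_sub_comm, abs_sub_lt_iff, sub_zero] at this
    exact this.2
  have hfin : EMetric.hausdorffEdist (closure (Dn n)) (closure D) ≠ ⊤ :=
    Metric.hausdorffEdist_ne_top_of_nonempty_of_bounded
      ((hDn n).2.nonempty.closure) (hD.2.nonempty.closure)
      (hDnb n).closure hDb.closure
  have hDnE : Dn n ⊆ E k₁ := by
    intro x hx
    obtain ⟨y, hy, hxy⟩ := Metric.exists_dist_lt_of_hausdorffDist_lt
      (subset_closure hx) hHd hfin
    exact hthick (Metric.mem_thickening_iff.2 ⟨y, hy, hxy⟩)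
  -- squeeze
  have hlow : d (E k₁) z w ≤ d (Dn n) z w :=
    hanti (Dn n) (E k₁) (hDn n) (hEdom k₁) hDnE z hzDn w hwDn
  have hhigh : d (Dn n) z w ≤ d (I k₂) z w :=
    hanti (I k₂) (Dn n) (hIdom k₂) (hDn n) hIDn z hzI w hwI
  rw [Real.dist_eq, abs_sub_lt_iff]
  rw [Real.dist_eq, abs_sub_lt_iff] at hEk₁ hIk₂
  constructor
  · linarith [hIk₂.1]
  · linarith [hEk₁.2]
end
end
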